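/- Let m ≥ 1, 1 ≤ i ≤ m, and e ≥ 1. Then in Q_m: if e ≤ i, the power x_i^e equals the product x_{i−e+1} x_{i−e+2} ⋯ x_i, and if e > i, then x_i^e = 0. -/

import Mathlib

open MvPolynomial Finset
open scoped Fin.NatCast

noncomputable section

/-- The defining ideal of `Q_m`: generated by `x_1^2` and `x_i^2 - x_{i-1} x_i` for `2 ≤ i ≤ m`
(variables are 1-based; `X ((i-1 : ℕ) : Fin m)` is `x_i`). -/
def Qrel (m : ℕ) [NeZero m] : Ideal (MvPolynomial (Fin m) (ZMod 2)) :=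
  Ideal.span ((fun i : ℕ =>
      X ((i - 1 : ℕ) : Fin m) ^ 2 -
        (if i = 1 then 0 else X ((i - 2 : ℕ) : Fin m) * X ((i - 1 : ℕ) : Fin m))) ''
    Set.Icc 1 m)

/-- The ring `Q_m`. -/
abbrev Qring (m : ℕ) [NeZero m] : Type :=
  MvPolynomial (Fin m) (ZMod 2) ⧸ Qrel m

/-- The image of `x_i` (1-based, for `1 ≤ i ≤ m`) in `Q_m`. -/
def xQ (m : ℕ) [NeZero m] (i : ℕ) : Qring m :=
  Ideal.Quotient.mk (Qrel m) (X ((i - 1 : ℕ) : Fin m))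

lemma xQ_sq (m : ℕ) [NeZero m] {j : ℕ} (h1 : 1 ≤ j) (h2 : j ≤ m) :
    xQ m j ^ 2 = if j = 1 then 0 else xQ m (j - 1) * xQ m j := by
  have hmem : (X ((j - 1 : ℕ) : Fin m) ^ 2 -
      (if j = 1 then 0 else X ((j - 2 : ℕ) : Fin m) * X ((j - 1 : ℕ) : Fin m)))
      ∈ Qrel m :=
    Ideal.subset_span ⟨j, ⟨h1, h2⟩, rfl⟩
  have h0 := (Ideal.Quotient.eq_zero_iff_mem).mpr hmem
  rw [map_sub, sub_eq_zero] at h0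
  by_cases h : j = 1
  · rw [h] at h0 ⊢
    rw [if_pos rfl, map_zero] at h0
    rw [if_pos rfl, xQ, ← map_pow]
    exact h0
  · rw [if_neg h] at h0 ⊢
    have hj : j - 1 - 1 = j - 2 := by omega
    rw [map_mul] at h0
    simp only [xQ, ← map_pow, ← map_mul, hj]
    exact h0

lemma xQ_mul_prod (m : ℕ) [NeZero m] {a j : ℕ} (ha : 1 ≤ a) (haj : a ≤ j) :
    j ≤ m →
    xQ m j * ∏ k ∈ Finset.Icc a j, xQ m k =
      if a = 1 then 0 else ∏ k ∈ Finset.Icc (a - 1) j, xQ m k := by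
  induction j, haj using Nat.le_induction with
  | base =>
    intro hm
    rw [Finset.Icc_self, Finset.prod_singleton, ← sq, xQ_sq m ha hm]
    by_cases h : a = 1
    · simp [h]
    · rw [if_neg h, if_neg h]
      obtain ⟨b, rfl⟩ : ∃ b, a = b + 1 := ⟨a - 1, by omega⟩
      rw [Finset.prod_Icc_succ_top (by omega)]
      simp [Nat.add_sub_cancel]
  | succ j hj ih =>
    intro hm
    have hjm : j ≤ m := by omega
    have h2 : xQ m (j + 1) ^ 2 = xQ m j * xQ m (j + 1) := by
      have h := xQ_sq m (j := j + 1) (by omega) hm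
      rw [if_neg (by omega), Nat.add_sub_cancel] at h
      exact h
    calc xQ m (j + 1) * ∏ k ∈ Finset.Icc a (j + 1), xQ m k
        = xQ m (j + 1) ^ 2 * ∏ k ∈ Finset.Icc a j, xQ m k := by
          rw [Finset.prod_Icc_succ_top (by omega)]; ring
      _ = xQ m (j + 1) * (xQ m j * ∏ k ∈ Finset.Icc a j, xQ m k) := by rw [h2]; ring
      _ = xQ m (j + 1) * (if a = 1 then 0 else ∏ k ∈ Finset.Icc (a - 1) j, xQ m k) := by
          rw [ih hjm]
      _ = if a = 1 then 0 else ∏ k ∈ Finset.Icc (a - 1) (j + 1), xQ m k := by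
          by_cases h : a = 1
          · simp [h]
          · rw [if_neg h, if_neg h, Finset.prod_Icc_succ_top (by omega)]; ring

lemma xQ_pow_eq (m : ℕ) [NeZero m] {i e : ℕ} (hi1 : 1 ≤ i) (him : i ≤ m) (he1 : 1 ≤ e) :
    e ≤ i → xQ m i ^ e = ∏ k ∈ Finset.Icc (i - e + 1) i, xQ m k := by
  induction e, he1 using Nat.le_induction with
  | base =>
    intro _
    have : i - 1 + 1 = i := by omega
    rw [this, Finset.Icc_self, Finset.prod_singleton, pow_one]
  | succ e he ih =>
    intro hei
    have hei' : e ≤ i := by omega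
    have ha : 2 ≤ i - e + 1 := by omega
    rw [pow_succ, ih hei', mul_comm, xQ_mul_prod m (by omega) (by omega) him,
      if_neg (by omega)]
    have : i - e + 1 - 1 = i - (e + 1) + 1 := by omega
    rw [this]

theorem statement6 (m : ℕ) [NeZero m] (hm : 1 ≤ m) (i e : ℕ)
    (hi1 : 1 ≤ i) (him : i ≤ m) (he : 1 ≤ e) :
    (e ≤ i → xQ m i ^ e = ∏ k ∈ Finset.Icc (i - e + 1) i, xQ m k) ∧
    (i < e → xQ m i ^ e = 0) := by
  constructor
  · exact xQ_pow_eq m hi1 him he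
  · intro hie
    have hz : xQ m i ^ (i + 1) = 0 := by
      rw [pow_succ, xQ_pow_eq m hi1 him hi1 le_rfl, mul_comm,
        xQ_mul_prod m (by omega) (by omega) him, if_pos (by omega)]
    calc xQ m i ^ e = xQ m i ^ (i + 1) * xQ m i ^ (e - (i + 1)) := by
          rw [← pow_add]; congr 1; omega
      _ = 0 := by rw [hz, zero_mul]
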